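/- Let r, s ≥ 1 be integers and let A ∈ F^{(r+s)n×(r+s)n} be a lower-triangular totally-non-singular matrix over a field F. For x ∈ (F^s)^k (k ≤ n), let x' ∈ F^{(r+s)k} be obtained by replacing each block x_i ∈ F^s by the vector in F^{r+s} obtained by appending r zeros. Then the n-truncated tree code TC_{A,(s,r)} : (F^s)^(≤n) → (F^{r+s})^(≤n) defined by x ↦ A^{((r+s)k)}x' (output viewed as k blocks in F^{r+s}) has distance greater than r/(r+s); that is, for every nonzero x ∈ (F^s)^k with ℓ = split(0, x), the number of blocks i ∈ [k] on which A^{((r+s)k)}x' is nonzero exceeds (r/(r+s))·(k − ℓ). -/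

import Mathlib

/-- A lower-triangular matrix is *totally non-singular* if every square submatrix
`A[I|J]` with row indices `I = {i₁ < ⋯ < i_r}` and column indices `J = {j₁ < ⋯ < j_r}`
satisfying `i_s ≥ j_s` for all `s` is non-singular. -/
def TotallyNonSingular {F : Type*} [Field F] {n : ℕ} (A : Matrix (Fin n) (Fin n) F) : Prop :=
  ∀ (r : ℕ) (I J : Fin r → Fin n), StrictMono I → StrictMono J →
    (∀ s : Fin r, J s ≤ I s) → (A.submatrix I J).det ≠ 0

/-- `x' ∈ F^{(r+s)k}` obtained from `x ∈ (F^s)^k` by appending `r` zeros to each block. -/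
def padBlocks {F : Type*} [Zero F] (r s k : ℕ) (x : Fin k → (Fin s → F)) :
    Fin ((r + s) * k) → F :=
  fun p =>
    if h : p.val % (r + s) < s then
      x ⟨p.val / (r + s), Nat.div_lt_of_lt_mul p.isLt⟩ ⟨p.val % (r + s), h⟩
    else 0

theorem blockIdx_lt {r s k : ℕ} (i : Fin k) (t : Fin (r + s)) :
    i.val * (r + s) + t.val < (r + s) * k :=
  calc i.val * (r + s) + t.val < i.val * (r + s) + (r + s) := Nat.add_lt_add_left t.isLt _
    _ = (i.val + 1) * (r + s) := by ring
    _ ≤ k * (r + s) := Nat.mul_le_mul_right _ i.isLt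
    _ = (r + s) * k := Nat.mul_comm _ _


private lemma blockLt {d b b' e e' : ℕ} (he : e < d) (h : b < b' ∨ (b = b' ∧ e < e')) :
    b * d + e < b' * d + e' := by
  rcases h with h | ⟨rfl, h⟩
  · calc b * d + e < b * d + d := by omega
      _ = (b + 1) * d := by ring
      _ ≤ b' * d := Nat.mul_le_mul_right _ h
      _ ≤ b' * d + e' := Nat.le_add_right _ _
  · omega

private lemma blockLe {d b b' e e' : ℕ} (he : e < d) (h : b < b' ∨ (b = b' ∧ e ≤ e')) :
    b * d + e ≤ b' * d + e' := by
  rcases h with h | ⟨rfl, h⟩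
  · exact le_of_lt (blockLt he (Or.inl h))
  · omega

private lemma blockDiv {d b e : ℕ} (he : e < d) : (b * d + e) / d = b := by
  have hd : 0 < d := by omega
  rw [Nat.add_comm, Nat.add_mul_div_right _ _ hd, Nat.div_eq_of_lt he, Nat.zero_add]

private lemma blockMod {d b e : ℕ} (he : e < d) : (b * d + e) % d = e := by
  rw [Nat.add_comm, Nat.add_mul_mod_self_right, Nat.mod_eq_of_lt he]

def bpos (r s k : ℕ) (i : Fin k) (t : Fin (r + s)) : Fin ((r + s) * k) :=
  ⟨i.val * (r + s) + t.val, blockIdx_lt i t⟩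

lemma padBlocks_bpos {F : Type*} [Zero F] (r s k : ℕ) (x : Fin k → (Fin s → F))
    (i : Fin k) (t : Fin (r + s)) :
    padBlocks r s k x (bpos r s k i t) = if h : t.val < s then x i ⟨t.val, h⟩ else 0 := by
  have h1 : (⟨(i.val * (r + s) + t.val) / (r + s),
      Nat.div_lt_of_lt_mul (blockIdx_lt i t)⟩ : Fin k) = i := Fin.ext (blockDiv t.isLt)
  unfold padBlocks bpos
  simp only [blockMod t.isLt, h1]


lemma bpos_val (r s k : ℕ) (i : Fin k) (t : Fin (r + s)) :
    (bpos r s k i t).val = i.val * (r + s) + t.val := rfl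

lemma bpos_lt_bpos {r s k : ℕ} {i i' : Fin k} {e e' : Fin (r + s)}
    (h : i.val < i'.val ∨ (i = i' ∧ e.val < e'.val)) :
    bpos r s k i e < bpos r s k i' e' := by
  rw [Fin.lt_def, bpos_val, bpos_val]
  apply blockLt e.isLt
  rcases h with h | ⟨rfl, h⟩
  · left; exact h
  · right; exact ⟨rfl, h⟩

lemma bpos_le_bpos {r s k : ℕ} {i i' : Fin k} {e e' : Fin (r + s)}
    (h : i.val < i'.val ∨ (i.val = i'.val ∧ e.val ≤ e'.val)) :
    bpos r s k i e ≤ bpos r s k i' e' := by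
  rw [Fin.le_def, bpos_val, bpos_val]
  apply blockLe e.isLt
  rcases h with h | ⟨h1, h2⟩
  · left; exact h
  · right; exact ⟨by rw [h1], h2⟩

/-- The column selection: the `t`-th data column among blocks `ℓ..m`. -/
def colF (r s k ℓ m : ℕ) (hs : 0 < s) (hm : m < k) (t : Fin (s * (m + 1 - ℓ))) :
    Fin ((r + s) * k) :=
  bpos r s k ⟨ℓ + t.val / s, by
      have h1 : t.val / s < m + 1 - ℓ := Nat.div_lt_of_lt_mul t.isLt
      generalize t.val / s = c at h1 ⊢
      omega⟩
    ⟨t.val % s, by have : t.val % s < s := Nat.mod_lt _ hs; omega⟩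

lemma colF_spec (r s k ℓ m : ℕ) (hs : 0 < s) (hm : m < k) (t : Fin (s * (m + 1 - ℓ))) :
    ∃ (i : Fin k) (e : Fin (r + s)), colF r s k ℓ m hs hm t = bpos r s k i e ∧
      i.val = ℓ + t.val / s ∧ e.val = t.val % s :=
  ⟨_, _, rfl, rfl, rfl⟩

lemma colF_strictMono (r s k ℓ m : ℕ) (hs : 0 < s) (hm : m < k) :
    StrictMono (colF r s k ℓ m hs hm) := by
  intro a b hab
  apply bpos_lt_bpos
  have hd : a.val / s ≤ b.val / s := Nat.div_le_div_right hab.le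
  rcases eq_or_lt_of_le hd with he | hlt
  · right
    refine ⟨Fin.ext (by simp only []; omega), ?_⟩
    have ha := Nat.div_add_mod a.val s
    have hb := Nat.div_add_mod b.val s
    rw [he] at ha
    have hab' : a.val < b.val := hab
    generalize s * (b.val / s) = C at ha hb
    simp only []
    omega
  · left
    simp only []
    omega

/-- The row selection: rows taken greedily from the top of the zero rows. -/
def rowF (r s k w q : ℕ) (gv : Fin w → Fin k) (hq : q ≤ (r + s) * w) (hq0 : 0 < q)
    (t : Fin q) : Fin ((r + s) * k) :=
  bpos r s k
    (gv ⟨((r + s) * w - q + t.val) / (r + s), by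
      apply Nat.div_lt_of_lt_mul
      have := t.isLt
      omega⟩)
    ⟨((r + s) * w - q + t.val) % (r + s), by
      have hd : 0 < r + s := by
        rcases Nat.eq_zero_or_pos (r + s) with h | h
        · exfalso; rw [h] at hq; simp at hq; omega
        · exact h
      exact Nat.mod_lt _ hd⟩

lemma rowF_spec (r s k w q : ℕ) (gv : Fin w → Fin k) (hq : q ≤ (r + s) * w) (hq0 : 0 < q)
    (t : Fin q) :
    ∃ (c : Fin w) (e : Fin (r + s)), rowF r s k w q gv hq hq0 t = bpos r s k (gv c) e ∧
      c.val = ((r + s) * w - q + t.val) / (r + s) ∧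
      e.val = ((r + s) * w - q + t.val) % (r + s) :=
  ⟨_, _, rfl, rfl, rfl⟩

lemma rowF_strictMono (r s k w q : ℕ) (gv : Fin w → Fin k) (hq : q ≤ (r + s) * w)
    (hq0 : 0 < q) (hgv : StrictMono gv) : StrictMono (rowF r s k w q gv hq hq0) := by
  intro a b hab
  unfold rowF
  apply bpos_lt_bpos
  have hple : (r + s) * w - q + a.val < (r + s) * w - q + b.val := by
    have : a.val < b.val := hab
    omega
  have hdle : ((r + s) * w - q + a.val) / (r + s) ≤ ((r + s) * w - q + b.val) / (r + s) :=
    Nat.div_le_div_right hple.le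
  rcases eq_or_lt_of_le hdle with he | hlt
  · right
    refine ⟨congrArg gv (Fin.ext he), ?_⟩
    have ha := Nat.div_add_mod ((r + s) * w - q + a.val) (r + s)
    have hb := Nat.div_add_mod ((r + s) * w - q + b.val) (r + s)
    rw [he] at ha
    generalize (r + s) * (((r + s) * w - q + b.val) / (r + s)) = C at ha hb
    show ((r + s) * w - q + a.val) % (r + s) < ((r + s) * w - q + b.val) % (r + s)
    omega
  · left
    exact hgv hlt

/-- **MDS tree codes of distance `r/(r+s)` (Pudlák).** Let `r, s ≥ 1` and let
`A ∈ F^{(r+s)n×(r+s)n}` be lower-triangular and totally non-singular.  The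
`n`-truncated tree code `TC_{A,(s,r)} : (F^s)^(≤n) → (F^{r+s})^(≤n)`,
`x ↦ A^{((r+s)k)}x'` (output viewed as `k` blocks in `F^{r+s}`), has distance
greater than `r/(r+s)`: for every nonzero `x ∈ (F^s)^k` with split `ℓ`, the number of
blocks on which `A^{((r+s)k)}x'` is nonzero exceeds `(r/(r+s))·(k − ℓ)`. -/
theorem mds_tree_code_distance_r_over_r_plus_s
    {F : Type*} [Field F] [DecidableEq F] {n : ℕ} (r s : ℕ) (hr : 1 ≤ r) (hs : 1 ≤ s)
    (A : Matrix (Fin ((r + s) * n)) (Fin ((r + s) * n)) F)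
    (hlow : ∀ i j : Fin ((r + s) * n), i < j → A i j = 0)
    (htns : TotallyNonSingular A)
    (k : ℕ) (hk : k ≤ n) :
    ∀ (x : Fin k → (Fin s → F)) (ℓ : ℕ) (hℓ : ℓ < k),
      (∀ i : Fin k, i.val < ℓ → x i = 0) → x ⟨ℓ, hℓ⟩ ≠ 0 →
      ((r : ℝ) / ((r : ℝ) + s)) * ((k : ℝ) - ℓ) <
        ((Finset.univ.filter fun i : Fin k => ∃ t : Fin (r + s),
          (A.submatrix (Fin.castLE (Nat.mul_le_mul (le_refl (r + s)) hk))
              (Fin.castLE (Nat.mul_le_mul (le_refl (r + s)) hk))).mulVec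
            (padBlocks r s k x) ⟨i.val * (r + s) + t.val, blockIdx_lt i t⟩ ≠ 0).card : ℝ) := by
  intro x ℓ hℓ hxz hxℓ
  by_contra hcon
  push_neg at hcon
  set B := A.submatrix (Fin.castLE (Nat.mul_le_mul (le_refl (r + s)) hk))
      (Fin.castLE (Nat.mul_le_mul (le_refl (r + s)) hk)) with hB
  set x' := padBlocks r s k x with hx'
  set S := Finset.univ.filter (fun i : Fin k => ∃ t : Fin (r + s),
      B.mulVec x' ⟨i.val * (r + s) + t.val, blockIdx_lt i t⟩ ≠ 0) with hSdef
  have hd : 0 < r + s := by omega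
  have hlowB : ∀ i j : Fin ((r + s) * k), i < j → B i j = 0 := by
    intro i j hij
    exact hlow _ _ ((Fin.strictMono_castLE _) hij)
  have hyS : ∀ i : Fin k, i ∉ S → ∀ t : Fin (r + s), B.mulVec x' (bpos r s k i t) = 0 := by
    intro i hi t
    by_contra h0
    exact hi (Finset.mem_filter.mpr ⟨Finset.mem_univ _, ⟨t, h0⟩⟩)
  have hmv : ∀ p : Fin ((r + s) * k), B.mulVec x' p = ∑ j, B p j * x' j := fun p => rfl
  have hx'res : ∀ j : Fin ((r + s) * k), s ≤ j.val % (r + s) → x' j = 0 := by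
    intro j hj
    rw [hx']
    unfold padBlocks
    rw [dif_neg (by omega)]
  have hx'low : ∀ j : Fin ((r + s) * k), j.val < (r + s) * ℓ → x' j = 0 := by
    intro j hj
    rw [hx']
    unfold padBlocks
    split
    · next h =>
      have h2 : j.val / (r + s) < ℓ := Nat.div_lt_of_lt_mul hj
      rw [hxz _ h2]
      rfl
    · rfl
  have hSge : ∀ i ∈ S, ℓ ≤ i.val := by
    intro i hiS
    by_contra hilt
    push_neg at hilt
    obtain ⟨-, t, ht⟩ := Finset.mem_filter.mp hiS
    apply ht
    rw [show (⟨i.val * (r + s) + t.val, blockIdx_lt i t⟩ : Fin ((r + s) * k))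
      = bpos r s k i t from rfl]
    rw [hmv]
    apply Finset.sum_eq_zero
    intro j _
    rcases lt_or_ge (bpos r s k i t) j with h | h
    · rw [hlowB _ _ h, zero_mul]
    · have h4 : i.val * (r + s) + t.val < (r + s) * ℓ := by
        have h5 : i.val * (r + s) + t.val < ℓ * (r + s) + 0 := blockLt t.isLt (Or.inl hilt)
        have h6 : ℓ * (r + s) = (r + s) * ℓ := Nat.mul_comm _ _
        omega
      have h7 : j.val ≤ i.val * (r + s) + t.val := h
      rw [hx'low j (by omega), mul_zero]
  set Zf : ℕ → Finset (Fin k) := fun m =>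
    Finset.univ.filter (fun i : Fin k => ℓ ≤ i.val ∧ i.val ≤ m ∧ i ∉ S) with hZf
  have hZf_mem : ∀ (m : ℕ) (i : Fin k), i ∈ Zf m ↔ ℓ ≤ i.val ∧ i.val ≤ m ∧ i ∉ S := by
    intro m i
    rw [hZf]
    simp [Finset.mem_filter]
  have hfilter_card : (Finset.univ.filter (fun i : Fin k => ℓ ≤ i.val)).card = k - ℓ := by
    rw [show (Finset.univ.filter (fun i : Fin k => ℓ ≤ i.val)) =
        Finset.map ⟨fun j : Fin (k - ℓ) => (⟨ℓ + j.val, by have := j.isLt; omega⟩ : Fin k),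
          fun a b hab => by
            have h1 : ℓ + a.val = ℓ + b.val := congrArg Fin.val hab
            exact Fin.ext (by omega)⟩ Finset.univ from ?_]
    · rw [Finset.card_map, Finset.card_univ, Fintype.card_fin]
    · ext i
      simp only [Finset.mem_filter, Finset.mem_univ, true_and, Finset.mem_map,
        Function.Embedding.coeFn_mk]
      constructor
      · intro hi
        exact ⟨⟨i.val - ℓ, by have := i.isLt; omega⟩, Fin.ext (by show ℓ + (i.val - ℓ) = i.val; omega)⟩
      · rintro ⟨j, hj⟩
        have h2 := congrArg Fin.val hj
        change ℓ + j.val = i.val at h2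
        omega
  have hunion : (Finset.univ.filter (fun i : Fin k => ℓ ≤ i.val)) ⊆ Zf (k - 1) ∪ S := by
    intro i hi
    rw [Finset.mem_union, hZf_mem]
    simp only [Finset.mem_filter, Finset.mem_univ, true_and] at hi
    by_cases hiS : i ∈ S
    · right; exact hiS
    · left; exact ⟨hi, by have := i.isLt; omega, hiS⟩
  have hkl : k - ℓ ≤ (Zf (k - 1)).card + S.card := by
    calc k - ℓ = (Finset.univ.filter (fun i : Fin k => ℓ ≤ i.val)).card := hfilter_card.symm
      _ ≤ (Zf (k - 1) ∪ S).card := Finset.card_le_card hunion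
      _ ≤ (Zf (k - 1)).card + S.card := Finset.card_union_le _ _
  have hNr : S.card * (r + s) ≤ r * (k - ℓ) := by
    have hpos : (0 : ℝ) < (r : ℝ) + s := by positivity
    rw [div_mul_eq_mul_div, le_div_iff₀ hpos] at hcon
    have hcast : ((k : ℝ) - ℓ) = ((k - ℓ : ℕ) : ℝ) := by
      rw [Nat.cast_sub hℓ.le]
    rw [hcast] at hcon
    exact_mod_cast hcon
  have hmain : s * (k - ℓ) ≤ (r + s) * (Zf (k - 1)).card := by
    have h2 : (r + s) * S.card ≤ r * (Zf (k - 1)).card + r * S.card := by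
      calc (r + s) * S.card = S.card * (r + s) := Nat.mul_comm _ _
        _ ≤ r * (k - ℓ) := hNr
        _ ≤ r * ((Zf (k - 1)).card + S.card) := Nat.mul_le_mul_left _ hkl
        _ = r * (Zf (k - 1)).card + r * S.card := Nat.mul_add _ _ _
    have h3 : s * S.card ≤ r * (Zf (k - 1)).card := by
      have h4 : (r + s) * S.card = r * S.card + s * S.card := by ring
      omega
    calc s * (k - ℓ) ≤ s * ((Zf (k - 1)).card + S.card) := Nat.mul_le_mul_left _ hkl
      _ = s * (Zf (k - 1)).card + s * S.card := Nat.mul_add _ _ _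
      _ ≤ s * (Zf (k - 1)).card + r * (Zf (k - 1)).card := Nat.add_le_add_left h3 _
      _ = (r + s) * (Zf (k - 1)).card := by ring
  have hex : ∃ m, ℓ ≤ m ∧ m < k ∧ s * (m + 1 - ℓ) ≤ (r + s) * (Zf m).card := by
    refine ⟨k - 1, by omega, by omega, ?_⟩
    rw [show k - 1 + 1 - ℓ = k - ℓ by omega]
    exact hmain
  obtain ⟨M0, hM0spec, hM0min⟩ : ∃ m, (ℓ ≤ m ∧ m < k ∧
      s * (m + 1 - ℓ) ≤ (r + s) * (Zf m).card) ∧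
      ∀ m' < m, ¬(ℓ ≤ m' ∧ m' < k ∧ s * (m' + 1 - ℓ) ≤ (r + s) * (Zf m').card) :=
    ⟨Nat.find hex, Nat.find_spec hex, fun m' h => Nat.find_min hex h⟩
  obtain ⟨hM0l, hM0k, hM0q⟩ := hM0spec
  have hmin : ∀ a, 1 ≤ a → ℓ + a ≤ M0 → (r + s) * (Zf (ℓ + a - 1)).card < s * a := by
    intro a ha haM
    have hne := hM0min (ℓ + a - 1) (by omega)
    by_contra hc
    push_neg at hc
    exact hne ⟨by omega, by omega, by rw [show ℓ + a - 1 + 1 - ℓ = a by omega]; exact hc⟩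
  set W := Zf M0 with hWD
  set w := W.card with hwD
  have hqw : s * (M0 + 1 - ℓ) ≤ (r + s) * w := hM0q
  set q := s * (M0 + 1 - ℓ) with hqD
  have hq0 : 0 < q := by
    rw [hqD]
    exact Nat.mul_pos (by omega) (by omega)
  set g := W.orderIsoOfFin hwD.symm with hgD
  set gv : Fin w → Fin k := fun c => (g c : Fin k) with hgvD
  have hgv_mono : StrictMono gv := fun a b hab => Subtype.coe_lt_coe.mpr (g.strictMono hab)
  have hgvS : ∀ c : Fin w, ℓ ≤ (gv c).val ∧ (gv c).val ≤ M0 ∧ gv c ∉ S := by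
    intro c
    have hmem : gv c ∈ W := (g c).2
    rw [hWD, hZf_mem] at hmem
    exact hmem
  have hkey : ∀ (a : ℕ), ℓ + a ≤ M0 →
      ∀ c : Fin w, (if a = 0 then 0 else (Zf (ℓ + a - 1)).card) ≤ c.val →
      ℓ + a ≤ (gv c).val := by
    intro a haM c hc
    rcases Nat.eq_zero_or_pos a with rfl | ha
    · have := (hgvS c).1; omega
    · by_contra hltc
      push_neg at hltc
      rw [if_neg (by omega)] at hc
      have hcw : c.val + 1 ≤ w := c.isLt
      have hsub : ∀ i : Fin (c.val + 1), gv (Fin.castLE hcw i) ∈ Zf (ℓ + a - 1) := by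
        intro i
        rw [hZf_mem]
        refine ⟨(hgvS _).1, ?_, (hgvS _).2.2⟩
        have h1 : gv (Fin.castLE hcw i) ≤ gv c :=
          hgv_mono.monotone (by rw [Fin.le_def]; exact Nat.lt_succ_iff.mp i.isLt)
        have h2 : (gv (Fin.castLE hcw i)).val ≤ (gv c).val := h1
        omega
      have hcard : c.val + 1 ≤ (Zf (ℓ + a - 1)).card := by
        have h5 := Fintype.card_le_of_injective
          (fun i : Fin (c.val + 1) =>
            (⟨gv (Fin.castLE hcw i), hsub i⟩ : {y // y ∈ Zf (ℓ + a - 1)}))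
          (fun i i' hii => by
            have h6 := congrArg Subtype.val hii
            have h7 := hgv_mono.injective h6
            exact Fin.castLE_injective hcw h7)
        simpa using h5
      omega
  have hmk : M0 < k := hM0k
  set Jf : Fin q → Fin ((r + s) * k) := colF r s k ℓ M0 (by omega) hmk with hJfD
  set If : Fin q → Fin ((r + s) * k) := rowF r s k w q gv hqw hq0 with hIfD
  have hJmono : StrictMono Jf := by rw [hJfD]; exact colF_strictMono r s k ℓ M0 (by omega) hmk
  have hImono : StrictMono If := by
    rw [hIfD]; exact rowF_strictMono r s k w q gv hqw hq0 hgv_mono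
  have hJI : ∀ t : Fin q, Jf t ≤ If t := by
    intro t
    obtain ⟨ic, ec, hceq, hcb, hce⟩ := colF_spec r s k ℓ M0 (by omega) hmk t
    obtain ⟨cr, er, hreq, hrb, hre⟩ := rowF_spec r s k w q gv hqw hq0 t
    rw [hJfD, hIfD, hceq, hreq]
    have ht : t.val < s * (M0 + 1 - ℓ) := lt_of_lt_of_le t.isLt (le_of_eq hqD)
    have hdm := Nat.div_add_mod t.val s
    have haM : ℓ + t.val / s ≤ M0 := by
      have h1 := Nat.div_lt_of_lt_mul ht
      generalize t.val / s = aa at h1 ⊢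
      omega
    have hdza : (r + s) * (if t.val / s = 0 then 0 else (Zf (ℓ + t.val / s - 1)).card)
        + t.val % s ≤ (r + s) * w - q + t.val := by
      rcases Nat.eq_zero_or_pos (t.val / s) with h0 | h1
      · rw [if_pos h0]
        rw [h0, Nat.mul_zero] at hdm
        omega
      · have hlt1 := hmin (t.val / s) h1 haM
        rw [if_neg (by omega)]
        omega
    set za := (if t.val / s = 0 then 0 else (Zf (ℓ + t.val / s - 1)).card) with hzaD
    have hcza : za ≤ ((r + s) * w - q + t.val) / (r + s) := by
      rw [Nat.le_div_iff_mul_le hd]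
      have h8 : za * (r + s) = (r + s) * za := Nat.mul_comm _ _
      omega
    have hgvcr : ℓ + t.val / s ≤ (gv cr).val := by
      apply hkey _ haM
      rw [← hzaD, hrb]
      exact hcza
    rcases eq_or_lt_of_le hcza with hceq2 | hclt
    · apply bpos_le_bpos
      rcases eq_or_lt_of_le hgvcr with hgeq | hglt
      · right
        constructor
        · omega
        · have hpdm := Nat.div_add_mod ((r + s) * w - q + t.val) (r + s)
          rw [← hceq2] at hpdm
          rw [hce, hre]
          omega
      · left; omega
    · have hzaw : za < w := by
        have h9 := cr.isLt
        omega
      have hgza : ℓ + t.val / s ≤ (gv ⟨za, hzaw⟩).val := by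
        apply hkey _ haM
        rw [← hzaD]
      have hgltv : (gv ⟨za, hzaw⟩).val < (gv cr).val := by
        apply hgv_mono
        rw [Fin.lt_def]
        show za < cr.val
        rw [hrb]
        exact hclt
      apply bpos_le_bpos
      left
      omega
  have hrow0 : ∀ t : Fin q, B.mulVec x' (If t) = 0 := by
    intro t
    obtain ⟨cr, er, hreq, -, -⟩ := rowF_spec r s k w q gv hqw hq0 t
    rw [hIfD, hreq]
    exact hyS _ (hgvS cr).2.2 er
  have hJinj : Function.Injective Jf := hJmono.injective
  have hsum0 : ∀ t : Fin q, ∑ u : Fin q, B (If t) (Jf u) * x' (Jf u) = 0 := by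
    intro t
    have h1 : ∑ j ∈ Finset.image Jf Finset.univ, B (If t) j * x' j
        = ∑ j, B (If t) j * x' j := by
      apply Finset.sum_subset (Finset.subset_univ _)
      intro j _ hj
      rcases Nat.lt_or_ge (j.val % (r + s)) s with hres | hres
      swap
      · rw [hx'res j hres, mul_zero]
      rcases Nat.lt_or_ge (j.val / (r + s)) ℓ with hjl | hjl
      · have hjlow : j.val < (r + s) * ℓ := by
          have hdm := Nat.div_add_mod j.val (r + s)
          have hb2 : (j.val / (r + s)) * (r + s) + j.val % (r + s) < ℓ * (r + s) + 0 :=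
            blockLt (Nat.mod_lt _ hd) (Or.inl hjl)
          have hcomm : ℓ * (r + s) = (r + s) * ℓ := Nat.mul_comm _ _
          have hcomm2 : (j.val / (r + s)) * (r + s) = (r + s) * (j.val / (r + s)) :=
            Nat.mul_comm _ _
          omega
        rw [hx'low j hjlow, mul_zero]
      rcases Nat.lt_or_ge M0 (j.val / (r + s)) with hjM | hjM
      · rw [hlowB _ _ ?_, zero_mul]
        obtain ⟨cr, er, hreq, hrb, hre⟩ := rowF_spec r s k w q gv hqw hq0 t
        rw [hIfD, hreq]
        rw [Fin.lt_def, bpos_val]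
        have hgcM : (gv cr).val ≤ M0 := (hgvS cr).2.1
        have h5 : (gv cr).val * (r + s) + er.val < (M0 + 1) * (r + s) + 0 :=
          blockLt er.isLt (Or.inl (by omega))
        have h6 : (M0 + 1) * (r + s) ≤ (j.val / (r + s)) * (r + s) :=
          Nat.mul_le_mul_right _ (by omega)
        have hdm := Nat.div_add_mod j.val (r + s)
        have hcomm2 : (j.val / (r + s)) * (r + s) = (r + s) * (j.val / (r + s)) :=
          Nat.mul_comm _ _
        omega
      · exfalso
        apply hj
        rw [Finset.mem_image]
        have hu : (j.val / (r + s) - ℓ) * s + j.val % (r + s) < q := by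
          rw [hqD]
          have h7 : (j.val / (r + s) - ℓ) * s + j.val % (r + s)
              < (j.val / (r + s) - ℓ) * s + s := by omega
          have h8 : (j.val / (r + s) - ℓ) * s + s = (j.val / (r + s) - ℓ + 1) * s := by ring
          have h9 : (j.val / (r + s) - ℓ + 1) * s ≤ (M0 + 1 - ℓ) * s :=
            Nat.mul_le_mul_right _ (by omega)
          have h10 : (M0 + 1 - ℓ) * s = s * (M0 + 1 - ℓ) := Nat.mul_comm _ _
          omega
        refine ⟨⟨_, hu⟩, Finset.mem_univ _, ?_⟩
        rw [hJfD]
        obtain ⟨ic, ec, hceq, hcb, hce⟩ := colF_spec r s k ℓ M0 (by omega) hmk ⟨_, hu⟩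
        rw [hceq]
        apply Fin.ext
        rw [bpos_val]
        have hval : ((⟨(j.val / (r + s) - ℓ) * s + j.val % (r + s), hu⟩ : Fin q)).val
            = (j.val / (r + s) - ℓ) * s + j.val % (r + s) := rfl
        rw [hval] at hcb hce
        have hus : ((j.val / (r + s) - ℓ) * s + j.val % (r + s)) / s = j.val / (r + s) - ℓ :=
          blockDiv hres
        have hum : ((j.val / (r + s) - ℓ) * s + j.val % (r + s)) % s = j.val % (r + s) :=
          blockMod hres
        rw [hus] at hcb
        rw [hum] at hce
        rw [hcb, hce]
        have h11 : ℓ + (j.val / (r + s) - ℓ) = j.val / (r + s) := by omega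
        rw [h11]
        have hdm := Nat.div_add_mod j.val (r + s)
        have hcomm2 : (j.val / (r + s)) * (r + s) = (r + s) * (j.val / (r + s)) :=
          Nat.mul_comm _ _
        omega
    have h2 : ∑ j ∈ Finset.image Jf Finset.univ, B (If t) j * x' j
        = ∑ u : Fin q, B (If t) (Jf u) * x' (Jf u) :=
      Finset.sum_image (fun a _ b _ hab => hJinj hab)
    calc ∑ u : Fin q, B (If t) (Jf u) * x' (Jf u)
        = ∑ j ∈ Finset.image Jf Finset.univ, B (If t) j * x' j := h2.symm
      _ = ∑ j, B (If t) j * x' j := h1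
      _ = B.mulVec x' (If t) := (hmv _).symm
      _ = 0 := hrow0 t
  have hdet : (B.submatrix If Jf).det ≠ 0 := by
    have h12 := htns q (Fin.castLE (Nat.mul_le_mul (le_refl (r + s)) hk) ∘ If)
      (Fin.castLE (Nat.mul_le_mul (le_refl (r + s)) hk) ∘ Jf)
      ((Fin.strictMono_castLE _).comp hImono)
      ((Fin.strictMono_castLE _).comp hJmono)
      (fun u => (Fin.strictMono_castLE _).monotone (hJI u))
    rw [hB, Matrix.submatrix_submatrix]
    exact h12
  have hmv2 : (B.submatrix If Jf).mulVec (fun u => x' (Jf u)) = 0 := by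
    funext t
    show ∑ u : Fin q, B (If t) (Jf u) * x' (Jf u) = 0
    exact hsum0 t
  have hv0 : (fun u : Fin q => x' (Jf u)) = 0 := Matrix.eq_zero_of_mulVec_eq_zero hdet hmv2
  obtain ⟨c0, hc0⟩ : ∃ c0 : Fin s, x ⟨ℓ, hℓ⟩ c0 ≠ 0 := by
    by_contra hall
    push_neg at hall
    exact hxℓ (funext hall)
  have hsq : c0.val < q := by
    have h13 : s ≤ q := by
      rw [hqD]
      exact Nat.le_mul_of_pos_right s (by omega)
    have := c0.isLt
    omega
  have hfin := congrFun hv0 ⟨c0.val, hsq⟩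
  simp only [Pi.zero_apply] at hfin
  apply hc0
  obtain ⟨ic, ec, hceq, hcb, hce⟩ := colF_spec r s k ℓ M0 (by omega) hmk ⟨c0.val, hsq⟩
  rw [hJfD, hceq, hx', padBlocks_bpos] at hfin
  have hval2 : ((⟨c0.val, hsq⟩ : Fin q)).val = c0.val := rfl
  rw [hval2] at hcb hce
  have hecv : ec.val = c0.val := by
    rw [hce]
    exact Nat.mod_eq_of_lt c0.isLt
  have hicv : ic.val = ℓ := by
    rw [hcb, Nat.div_eq_of_lt c0.isLt]
    exact Nat.add_zero ℓ
  have hlt2 : ec.val < s := by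
    rw [hecv]; exact c0.isLt
  rw [dif_pos hlt2] at hfin
  rw [show (⟨ℓ, hℓ⟩ : Fin k) = ic from (Fin.ext hicv).symm]
  rw [show c0 = (⟨ec.val, hlt2⟩ : Fin s) from (Fin.ext hecv.symm)]
  exact hfin
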